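/- If agent n's risk measure is ρ_n(X) = F_n*(−X) (the conjugate of a penalty F_n evaluated at −X) and the market maker's pricing rule is c = F₀*, then the negated market global objective −min_{X₁,…,X_N} [ c(Σ_n X_n) + Σ_n ρ_n(X_n) ] is a lower bound for the primal machine learning objective min_P Σ_{n=0}^N F_n(P), with equality when strong Fenchel duality holds (e.g., when all F_n are proper convex lsc on ℝ^K and a standard constraint qualification holds). -/

import Mathlib

open scoped BigOperators

/-- Legendre–Fenchel conjugate of a real-valued function on `ℝ^K`,
valued in the extended reals. -/
noncomputable def fenchelConj {K : ℕ} (f : (Fin K → ℝ) → ℝ) (x : Fin K → ℝ) : EReal :=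
  ⨆ p : Fin K → ℝ, (((∑ i, x i * p i - f p : ℝ) : EReal))

noncomputable def erealHom : ℝ →+ EReal :=
  ⟨⟨(fun r => (r : EReal)), EReal.coe_zero⟩, fun a b => EReal.coe_add a b⟩


lemma aux_sup_sum_le {N : ℕ} {A B : Type*} [Nonempty A] [Nonempty B]
    (e0 : A → ℝ) (e : Fin N → B → ℝ) (r : ℝ)
    (H : ∀ (P : A) (q : Fin N → B), e0 P + ∑ n, e n (q n) ≤ r) :
    (⨆ P, ((e0 P : ℝ) : EReal)) + ∑ n : Fin N, (⨆ q : B, ((e n q : ℝ) : EReal)) ≤ (r : EReal) := by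
  classical
  obtain ⟨P₀⟩ := ‹Nonempty A›
  obtain ⟨q₀⟩ := ‹Nonempty B›
  -- bounds
  have hb0 : BddAbove (Set.range e0) := by
    refine ⟨r - ∑ n : Fin N, e n q₀, ?_⟩
    rintro _ ⟨P, rfl⟩
    have := H P (fun _ => q₀)
    linarith
  have hbn : ∀ n : Fin N, BddAbove (Set.range (e n)) := by
    intro n
    refine ⟨r - e0 P₀ - ∑ m : Fin N, e m q₀ + e n q₀, ?_⟩
    rintro _ ⟨q, rfl⟩
    have := H P₀ (Function.update (fun _ => q₀) n q)
    have hsum : ∑ m : Fin N, e m (Function.update (fun _ => q₀) n q m)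
        = ∑ m : Fin N, e m q₀ - e n q₀ + e n q := by
      rw [← Finset.sum_erase_add _ _ (Finset.mem_univ n),
          ← Finset.sum_erase_add _ (fun m => e m q₀) (Finset.mem_univ n)]
      simp only [Function.update_self]
      have : ∀ m ∈ Finset.univ.erase n, e m (Function.update (fun _ => q₀) n q m) = e m q₀ := by
        intro m hm
        rw [Function.update_of_ne (Finset.ne_of_mem_erase hm)]
      rw [Finset.sum_congr rfl this]
      ring
    rw [hsum] at this
    linarith
  set s0 : ℝ := sSup (Set.range e0) with hs0
  set s : Fin N → ℝ := fun n => sSup (Set.range (e n)) with hs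
  have hmain : s0 + ∑ n : Fin N, s n ≤ r := by
    refine le_of_forall_pos_le_add fun ε hε => ?_
    set δ := ε / (N + 1) with hδ
    have hδpos : 0 < δ := by positivity
    obtain ⟨_, ⟨P, rfl⟩, hP⟩ := exists_lt_of_lt_csSup (Set.range_nonempty e0)
      (show s0 - δ < s0 by linarith)
    have hq : ∀ n : Fin N, ∃ q : B, s n - δ < e n q := by
      intro n
      obtain ⟨_, ⟨q, rfl⟩, hq⟩ := exists_lt_of_lt_csSup (Set.range_nonempty (e n))
        (show s n - δ < s n by linarith)
      exact ⟨q, hq⟩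
    choose q hq using hq
    have h1 := H P q
    have h2 : ∑ n : Fin N, (s n - δ) ≤ ∑ n : Fin N, e n (q n) :=
      Finset.sum_le_sum fun n _ => (hq n).le
    have h3 : ∑ n : Fin N, (s n - δ) = (∑ n : Fin N, s n) - N * δ := by
      rw [Finset.sum_sub_distrib]
      simp [Finset.sum_const, nsmul_eq_mul]
    have hNδ : δ + N * δ ≤ ε := by
      have : ((N : ℝ) + 1) * δ = ε := by
        rw [hδ]; field_simp
      nlinarith [Nat.cast_nonneg (α := ℝ) N]
    nlinarith
  calc (⨆ P, ((e0 P : ℝ) : EReal)) + ∑ n : Fin N, (⨆ q : B, ((e n q : ℝ) : EReal))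
      ≤ ((s0 : ℝ) : EReal) + ∑ n : Fin N, ((s n : ℝ) : EReal) := by
        refine add_le_add ?_ (Finset.sum_le_sum fun n _ => ?_)
        · exact iSup_le fun P => EReal.coe_le_coe_iff.mpr (le_csSup hb0 ⟨P, rfl⟩)
        · exact iSup_le fun q => EReal.coe_le_coe_iff.mpr (le_csSup (hbn n) ⟨q, rfl⟩)
    _ = ((s0 + ∑ n : Fin N, s n : ℝ) : EReal) := by
        have hms : ((∑ n : Fin N, s n : ℝ) : EReal) = ∑ n : Fin N, ((s n : ℝ) : EReal) :=
          map_sum erealHom s Finset.univ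
        rw [EReal.coe_add, hms]
    _ ≤ (r : EReal) := EReal.coe_le_coe_iff.mpr hmain

lemma aux_iInf_coe {A : Type*} [Nonempty A] (f : A → ℝ) (h : BddBelow (Set.range f)) :
    ⨅ a, ((f a : ℝ) : EReal) = ((sInf (Set.range f) : ℝ) : EReal) := by
  refine le_antisymm ?_ (le_iInf fun a => EReal.coe_le_coe_iff.mpr (csInf_le h ⟨a, rfl⟩))
  by_contra h'
  push_neg at h'
  obtain ⟨r, hr1, hr2⟩ := EReal.exists_between_coe_real h'
  obtain ⟨_, ⟨a, rfl⟩, ha⟩ := exists_lt_of_csInf_lt (Set.range_nonempty f)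
    (EReal.coe_lt_coe_iff.mp hr1)
  exact absurd ((iInf_le (fun a => ((f a : ℝ) : EReal)) a).trans_lt
    ((EReal.coe_lt_coe_iff.mpr ha).trans hr2)) (lt_irrefl _)

lemma aux_iInf_coe_bot {A : Type*} [Nonempty A] (f : A → ℝ) (h : ¬ BddBelow (Set.range f)) :
    ⨅ a, ((f a : ℝ) : EReal) = (⊥ : EReal) := by
  by_contra h'
  obtain ⟨r, hr1, hr2⟩ := EReal.exists_between_coe_real (Ne.bot_lt h')
  have : ∃ a, f a < r := by
    by_contra hc
    push_neg at hc
    exact h ⟨r, by rintro _ ⟨a, rfl⟩; exact hc a⟩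
  obtain ⟨a, ha⟩ := this
  exact absurd ((iInf_le (fun a => ((f a : ℝ) : EReal)) a).trans_lt
    ((EReal.coe_lt_coe_iff.mpr ha).trans hr2)) (lt_irrefl _)

lemma aux_strong {K N : ℕ} (F : Fin (N + 1) → (Fin K → ℝ) → ℝ)
    (hconv : ∀ n, ConvexOn ℝ Set.univ (F n))
    (hbdd : BddBelow (Set.range fun P => ∑ n, F n P))
    (ε : ℝ) (hε : 0 < ε) :
    ∃ X : Fin N → Fin K → ℝ,
      fenchelConj (F 0) (∑ n, X n) + ∑ n : Fin N, fenchelConj (F n.succ) (-(X n))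
        ≤ ((ε - sInf (Set.range fun P => ∑ n, F n P) : ℝ) : EReal) := by
  classical
  set v : ℝ := sInf (Set.range fun P => ∑ n, F n P) with hv
  set g : (Fin N → Fin K → ℝ) → (Fin K → ℝ) → ℝ :=
    fun u P => F 0 P + ∑ n : Fin N, F n.succ (P + u n) with hg
  have hg0 : g 0 = fun P => ∑ n, F n P := by
    funext P
    rw [Fin.sum_univ_succ]
    simp [hg]
  have hbdd0 : BddBelow (Set.range (g 0)) := by rw [hg0]; exact hbdd
  have hv0 : v = sInf (Set.range (g 0)) := by rw [hg0]
  -- joint convexity of g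
  have hmid : ∀ (u w : Fin N → Fin K → ℝ) (P Q : Fin K → ℝ) (a b : ℝ),
      0 ≤ a → 0 ≤ b → a + b = 1 →
      g (a • u + b • w) (a • P + b • Q) ≤ a * g u P + b * g w Q := by
    intro u w P Q a b ha hb hab
    have h0 := (hconv 0).2 (Set.mem_univ P) (Set.mem_univ Q) ha hb hab
    simp only [smul_eq_mul] at h0
    have hn : ∀ n : Fin N,
        F n.succ ((a • P + b • Q) + (a • u + b • w) n)
          ≤ a * F n.succ (P + u n) + b * F n.succ (Q + w n) := by
      intro n
      have harg : (a • P + b • Q) + (a • u + b • w) n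
          = a • (P + u n) + b • (Q + w n) := by
        funext i
        simp [Pi.add_apply, Pi.smul_apply, smul_eq_mul]
        ring
      rw [harg]
      exact (hconv n.succ).2 (Set.mem_univ _) (Set.mem_univ _) ha hb hab
    have hsum := Finset.sum_le_sum (fun n (_ : n ∈ Finset.univ) => hn n)
    rw [Finset.sum_add_distrib] at hsum
    have expand : a * g u P + b * g w Q
        = (a * F 0 P + b * F 0 Q)
          + ((∑ n : Fin N, a * F n.succ (P + u n)) + ∑ n : Fin N, b * F n.succ (Q + w n)) := by
      simp only [hg]
      rw [mul_add, mul_add, Finset.mul_sum, Finset.mul_sum]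
      ring
    rw [expand]
    simp only [hg]
    linarith [h0, hsum]
  -- lower bound for g u
  have hlb : ∀ u P, 2 * v - g (-u) 0 ≤ g u P := by
    intro u P
    have h := hmid u (-u) P 0 (1/2) (1/2) (by norm_num) (by norm_num) (by norm_num)
    have hzero : ((1:ℝ)/2) • u + ((1:ℝ)/2) • (-u) = 0 := by
      funext n i; simp
    rw [hzero] at h
    have hvle : v ≤ g 0 ((1/2 : ℝ) • P + (1/2 : ℝ) • (0 : Fin K → ℝ)) := by
      rw [hv0]; exact csInf_le hbdd0 ⟨_, rfl⟩
    clear_value v g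
    linarith
  have hbb : ∀ u, BddBelow (Set.range (g u)) := by
    intro u
    exact ⟨2 * v - g (-u) 0, by rintro _ ⟨P, rfl⟩; exact hlb u P⟩
  have hne : ∀ u, (Set.range (g u)).Nonempty := fun u => ⟨g u 0, ⟨0, rfl⟩⟩
  obtain ⟨φ, hφe⟩ : ∃ φ : (Fin N → Fin K → ℝ) → ℝ, ∀ u, φ u = sInf (Set.range (g u)) :=
    ⟨fun u => sInf (Set.range (g u)), fun _ => rfl⟩
  have hφ0 : φ 0 = v := by rw [hφe]; exact hv0.symm
  have hφle : ∀ u P, φ u ≤ g u P := fun u P => by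
    rw [hφe]; exact csInf_le (hbb u) ⟨P, rfl⟩
  -- convexity of φ
  have hφconv : ConvexOn ℝ Set.univ φ := by
    refine ⟨convex_univ, ?_⟩
    intro u _ w _ a b ha hb hab
    rcases eq_or_lt_of_le ha with rfl | ha'
    · have hb1 : b = 1 := by linarith
      subst hb1; simp
    rcases eq_or_lt_of_le hb with rfl | hb'
    · have ha1 : a = 1 := by linarith
      subst ha1; simp
    have key : ∀ P Q, φ (a • u + b • w) ≤ a * g u P + b * g w Q := by
      intro P Q
      exact (hφle _ (a • P + b • Q)).trans (hmid u w P Q a b ha hb hab)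
    have step1 : ∀ Q, φ (a • u + b • w) ≤ a * φ u + b * g w Q := by
      intro Q
      have h5 : (φ (a • u + b • w) - b * g w Q) / a ≤ φ u := by
        rw [hφe u]
        refine le_csInf (hne u) ?_
        rintro _ ⟨P, rfl⟩
        rw [div_le_iff₀ ha']
        linarith [key P Q, mul_comm (g u P) a]
      rw [div_le_iff₀ ha'] at h5
      linarith [mul_comm (φ u) a]
    have step2 : (φ (a • u + b • w) - a * φ u) / b ≤ φ w := by
      rw [hφe w]
      refine le_csInf (hne w) ?_
      rintro _ ⟨Q, rfl⟩
      rw [div_le_iff₀ hb']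
      linarith [step1 Q, mul_comm (g w Q) b]
    rw [div_le_iff₀ hb'] at step2
    simp only [smul_eq_mul]
    linarith [mul_comm (φ w) b]
  -- continuity
  have hφcont : Continuous φ := by
    have := hφconv.continuousOn isOpen_univ
    rwa [continuousOn_univ] at this
  -- strict epigraph
  set S : Set ((Fin N → Fin K → ℝ) × ℝ) := {p | φ p.1 < p.2} with hS
  have hSopen : IsOpen S := isOpen_lt (hφcont.comp continuous_fst) continuous_snd
  have hSconv : Convex ℝ S := by
    intro p hp q hq a b ha hb hab
    simp only [hS, Set.mem_setOf_eq] at *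
    have h1 : φ (a • p.1 + b • q.1) ≤ a * φ p.1 + b * φ q.1 := by
      simpa using hφconv.2 (Set.mem_univ p.1) (Set.mem_univ q.1) ha hb hab
    have h2 : a * φ p.1 + b * φ q.1 < a * p.2 + b * q.2 := by
      rcases eq_or_lt_of_le ha with rfl | ha'
      · have hb1 : b = 1 := by linarith
        subst hb1; simpa using hq
      · have h3 := mul_le_mul_of_nonneg_left hq.le hb
        have h4 := mul_lt_mul_of_pos_left hp ha'
        linarith
    exact h1.trans_lt h2
  have hx : ((0 : Fin N → Fin K → ℝ), v - ε) ∉ S := by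
    simp only [hS, Set.mem_setOf_eq, hφ0, not_lt]
    linarith
  obtain ⟨f, hf⟩ := geometric_hahn_banach_open_point hSconv hSopen hx
  replace hf : ∀ p : (Fin N → Fin K → ℝ) × ℝ, φ p.1 < p.2 → f p < f (0, v - ε) := by
    intro p hp
    exact hf p (by simpa only [hS, Set.mem_setOf_eq] using hp)
  clear_value S
  -- decompose f
  set G : (Fin N → Fin K → ℝ) →L[ℝ] ℝ :=
    f.comp (ContinuousLinearMap.inl ℝ (Fin N → Fin K → ℝ) ℝ) with hG
  set α : ℝ := f (0, 1) with hα
  have hsplit : ∀ (u : Fin N → Fin K → ℝ) (t : ℝ), f (u, t) = G u + t * α := by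
    intro u t
    have h1 : ((u, t) : (Fin N → Fin K → ℝ) × ℝ)
        = (u, 0) + t • ((0 : Fin N → Fin K → ℝ), (1:ℝ)) := by
      simp [Prod.ext_iff]
    rw [h1, map_add, map_smul, smul_eq_mul, hα, hG]
    simp
  clear_value G α
  have hG0 : G 0 = 0 := map_zero G
  have hfx : f (0, v - ε) = (v - ε) * α := by rw [hsplit]; simp [hG0]
  have hαneg : α < 0 := by
    by_contra hp
    push_neg at hp
    have h1 := hf (0, v + 1) (by show φ 0 < v + 1; rw [hφ0]; linarith)
    rw [hsplit, hfx, hG0] at h1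
    nlinarith [mul_nonneg hp (by linarith : (0:ℝ) ≤ 1 + ε)]
  have hα0 : α ≠ 0 := ne_of_lt hαneg
  -- subgradient inequality
  have hkey : ∀ u, G u + φ u * α ≤ (v - ε) * α := by
    intro u
    by_contra hcon
    push_neg at hcon
    obtain ⟨δ, hδpos, hδα⟩ : ∃ δ : ℝ, 0 < δ ∧ δ * α = -(G u + φ u * α - (v - ε) * α) := by
      refine ⟨(G u + φ u * α - (v - ε) * α) / (-α), div_pos (by linarith) (by linarith), ?_⟩
      rw [div_neg, neg_mul, div_mul_cancel₀ _ hα0]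
    have h1 := hf (u, φ u + δ) (by show φ u < φ u + δ; linarith)
    rw [hsplit, hfx, add_mul] at h1
    linarith
  -- linear representation of G
  set E : Fin N → Fin K → (Fin N → Fin K → ℝ) :=
    fun n i => Pi.single n (Pi.single i (1:ℝ)) with hE
  have hrep : ∀ u : Fin N → Fin K → ℝ, G u = ∑ n : Fin N, ∑ i : Fin K, u n i * G (E n i) := by
    intro u
    have hu : u = ∑ n : Fin N, ∑ i : Fin K, u n i • E n i := by
      funext m j
      simp only [Finset.sum_apply, Pi.smul_apply, smul_eq_mul, hE]
      rw [Finset.sum_eq_single m]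
      · rw [Finset.sum_eq_single j]
        · simp
        · intro i _ hij; simp [Pi.single_apply, hij]
        · intro hj; exact absurd (Finset.mem_univ j) hj
      · intro n _ hnm
        simp [Pi.single_apply, hnm]
      · intro hm; exact absurd (Finset.mem_univ m) hm
    calc G u = G (∑ n : Fin N, ∑ i : Fin K, u n i • E n i) := by rw [← hu]
      _ = ∑ n : Fin N, ∑ i : Fin K, u n i * G (E n i) := by
          rw [map_sum]
          refine Finset.sum_congr rfl fun n _ => ?_
          rw [map_sum]
          refine Finset.sum_congr rfl fun i _ => ?_
          rw [map_smul, smul_eq_mul]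
  clear_value E
  -- the dual point
  set X : Fin N → Fin K → ℝ := fun n i => -(G (E n i)) / α with hX
  have hpair : ∀ u : Fin N → Fin K → ℝ,
      ∑ n : Fin N, ∑ i : Fin K, X n i * u n i = -(G u) / α := by
    intro u
    rw [hrep u, neg_div, Finset.sum_div, ← Finset.sum_neg_distrib]
    refine Finset.sum_congr rfl fun n _ => ?_
    rw [Finset.sum_div, ← Finset.sum_neg_distrib]
    refine Finset.sum_congr rfl fun i _ => ?_
    simp only [hX]
    ring
  clear_value X
  -- subgradient inequality in inner-product form
  have hgrad : ∀ u, v - ε + ∑ n : Fin N, ∑ i : Fin K, X n i * u n i ≤ φ u := by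
    intro u
    rw [hpair u]
    obtain ⟨t, ht⟩ : ∃ t : ℝ, t = -G u / α := ⟨_, rfl⟩
    rw [← ht]
    by_contra hcon
    push_neg at hcon
    have h2 : (v - ε + t) * α < φ u * α := mul_lt_mul_of_neg_right hcon hαneg
    have h3 : t * α = -G u := by rw [ht, div_mul_cancel₀ _ hα0]
    rw [add_mul] at h2
    linarith [hkey u]
  -- master inequality and conclusion
  refine ⟨fun n => -(X n), ?_⟩
  simp only [neg_neg]
  have H : ∀ (P : Fin K → ℝ) (q : Fin N → Fin K → ℝ),
      (∑ i, (∑ n : Fin N, -(X n)) i * P i - F 0 P)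
        + ∑ n : Fin N, (∑ i, X n i * q n i - F n.succ (q n)) ≤ ε - v := by
    intro P q
    have h1 := hgrad (fun n => q n - P)
    have h2 : φ (fun n => q n - P) ≤ F 0 P + ∑ n : Fin N, F n.succ (q n) := by
      have h2' := hφle (fun n => q n - P) P
      have hgeq : g (fun n => q n - P) P = F 0 P + ∑ n : Fin N, F n.succ (q n) := by
        rw [hg]
        refine congrArg (fun z => F 0 P + z) ?_
        refine Finset.sum_congr rfl fun n _ => ?_
        refine congrArg (F n.succ) ?_
        funext i
        simp only [Pi.add_apply, Pi.sub_apply]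
        ring
      rwa [hgeq] at h2'
    have h3 : ∑ n : Fin N, ∑ i : Fin K, X n i * ((fun n => q n - P) n i)
        = (∑ n : Fin N, ∑ i : Fin K, X n i * q n i)
          + ∑ i, (∑ n : Fin N, -(X n)) i * P i := by
      have hcoe : ∀ i, (∑ n : Fin N, -(X n)) i = ∑ n : Fin N, -(X n i) := by
        intro i; simp [Finset.sum_apply]
      simp only [hcoe, Pi.sub_apply, mul_sub, Finset.sum_sub_distrib, Finset.sum_mul,
        neg_mul, Finset.sum_neg_distrib]
      rw [Finset.sum_comm (γ := Fin K)]
      ring_nf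
    have h4 : ∑ n : Fin N, (∑ i, X n i * q n i - F n.succ (q n))
        = (∑ n : Fin N, ∑ i, X n i * q n i) - ∑ n : Fin N, F n.succ (q n) :=
      Finset.sum_sub_distrib _ _
    rw [h3] at h1
    linarith
  have := aux_sup_sum_le
    (fun P : Fin K → ℝ => ∑ i, (∑ n : Fin N, -(X n)) i * P i - F 0 P)
    (fun (n : Fin N) (q : Fin K → ℝ) => ∑ i, X n i * q i - F n.succ q)
    (ε - v) H
  exact this


/-- If agent `n`'s risk measure is `ρ_n(X) = F_n*(-X)` and the
market maker's pricing rule is `c = F₀*`, then the negated market global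
objective `-min_{X₁,…,X_N} [c(Σ_n X_n) + Σ_n ρ_n(X_n)]` lower-bounds the primal
objective `min_P Σ_{n=0}^N F_n(P)`, with equality under strong Fenchel duality
(here guaranteed by the constraint qualification that the `F_n` are finite-valued
convex lower semicontinuous on all of `ℝ^K`). -/
theorem stmt_11 (K N : ℕ) (F : Fin (N + 1) → (Fin K → ℝ) → ℝ)
    (hconv : ∀ n, ConvexOn ℝ Set.univ (F n))
    (hlsc : ∀ n, LowerSemicontinuous (F n))
    (ρ : Fin N → (Fin K → ℝ) → EReal) (c : (Fin K → ℝ) → EReal)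
    (hρ : ∀ (n : Fin N) (X : Fin K → ℝ), ρ n X = fenchelConj (F n.succ) (-X))
    (hc : ∀ X : Fin K → ℝ, c X = fenchelConj (F 0) X) :
    -(⨅ X : Fin N → (Fin K → ℝ), c (∑ n, X n) + ∑ n : Fin N, ρ n (X n))
        ≤ ⨅ P : Fin K → ℝ, ((∑ n, F n P : ℝ) : EReal) ∧
    -(⨅ X : Fin N → (Fin K → ℝ), c (∑ n, X n) + ∑ n : Fin N, ρ n (X n))
        = ⨅ P : Fin K → ℝ, ((∑ n, F n P : ℝ) : EReal) := by
  classical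
  -- pointwise weak duality
  have hweak : ∀ (X : Fin N → Fin K → ℝ) (P : Fin K → ℝ),
      ((-(∑ n, F n P) : ℝ) : EReal) ≤ c (∑ n, X n) + ∑ n : Fin N, ρ n (X n) := by
    intro X P
    have h0 : ((∑ i, (∑ n, X n) i * P i - F 0 P : ℝ) : EReal) ≤ c (∑ n, X n) := by
      rw [hc]
      exact le_iSup (fun p => (((∑ i, (∑ n : Fin N, X n) i * p i - F 0 p : ℝ) : EReal))) P
    have hn : ∀ n : Fin N, ((∑ i, (-(X n)) i * P i - F n.succ P : ℝ) : EReal) ≤ ρ n (X n) := by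
      intro n
      rw [hρ]
      exact le_iSup (fun p => (((∑ i, (-(X n)) i * p i - F n.succ p : ℝ) : EReal))) P
    have hsum := Finset.sum_le_sum (fun n (_ : n ∈ Finset.univ) => hn n)
    have htot := add_le_add h0 hsum
    refine le_trans (le_of_eq ?_) htot
    have hcoe : (∑ n : Fin N, ((∑ i, (-(X n)) i * P i - F n.succ P : ℝ) : EReal))
        = ((∑ n : Fin N, (∑ i, (-(X n)) i * P i - F n.succ P) : ℝ) : EReal) :=
      (map_sum erealHom _ Finset.univ).symm
    rw [hcoe, ← EReal.coe_add, EReal.coe_eq_coe_iff]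
    -- real identity
    have e1 : ∑ i, (∑ n : Fin N, X n) i * P i = ∑ n : Fin N, ∑ i, X n i * P i := by
      rw [Finset.sum_comm]
      refine Finset.sum_congr rfl fun i _ => ?_
      rw [Finset.sum_apply, Finset.sum_mul]
    have e2 : ∑ n : Fin N, (∑ i, (-(X n)) i * P i - F n.succ P)
        = -(∑ n : Fin N, ∑ i, X n i * P i) - ∑ n : Fin N, F n.succ P := by
      rw [Finset.sum_sub_distrib, ← Finset.sum_neg_distrib]
      congr 1
      refine Finset.sum_congr rfl fun n _ => ?_
      rw [← Finset.sum_neg_distrib]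
      refine Finset.sum_congr rfl fun i _ => ?_
      simp
    rw [Fin.sum_univ_succ, e1, e2]
    ring
  -- first conjunct (weak duality)
  have hineq : -(⨅ X : Fin N → (Fin K → ℝ), c (∑ n, X n) + ∑ n : Fin N, ρ n (X n))
      ≤ ⨅ P : Fin K → ℝ, ((∑ n, F n P : ℝ) : EReal) := by
    refine le_iInf fun P => ?_
    rw [show ((∑ n, F n P : ℝ) : EReal) = -((-(∑ n, F n P) : ℝ) : EReal) by
      rw [← EReal.coe_neg]; norm_num]
    exact EReal.neg_le.mpr (by rw [neg_neg]; exact le_iInf fun X => hweak X P)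
  refine ⟨hineq, ?_⟩
  by_cases hbdd : BddBelow (Set.range fun P : Fin K → ℝ => ∑ n, F n P)
  · -- bounded below case : strong duality
    set v : ℝ := sInf (Set.range fun P : Fin K → ℝ => ∑ n, F n P) with hv
    have hJ : (⨅ P : Fin K → ℝ, ((∑ n, F n P : ℝ) : EReal)) = (v : EReal) :=
      aux_iInf_coe _ hbdd
    rw [hJ]
    refine le_antisymm (hJ ▸ hineq) ?_
    -- show I ≤ ↑(-v)
    have hI : (⨅ X : Fin N → (Fin K → ℝ), c (∑ n, X n) + ∑ n : Fin N, ρ n (X n))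
        ≤ ((-v : ℝ) : EReal) := by
      by_contra h'
      push_neg at h'
      obtain ⟨r, hr1, hr2⟩ := EReal.exists_between_coe_real h'
      have hεpos : 0 < r - (-v) := sub_pos.mpr (EReal.coe_lt_coe_iff.mp hr1)
      obtain ⟨X, hX⟩ := aux_strong F hconv hbdd (r - (-v)) hεpos
      have hDX : c (∑ n, X n) + ∑ n : Fin N, ρ n (X n) ≤ ((r : ℝ) : EReal) := by
        rw [hc]
        have hρs : ∀ n : Fin N, ρ n (X n) = fenchelConj (F n.succ) (-(X n)) :=
          fun n => hρ n (X n)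
        calc fenchelConj (F 0) (∑ n, X n) + ∑ n : Fin N, ρ n (X n)
            = fenchelConj (F 0) (∑ n, X n)
              + ∑ n : Fin N, fenchelConj (F n.succ) (-(X n)) := by
              congr 1
              exact Finset.sum_congr rfl fun n _ => hρs n
          _ ≤ ((r - (-v) - v : ℝ) : EReal) := hX
          _ = ((r : ℝ) : EReal) := by norm_num
      have := (iInf_le (fun X : Fin N → (Fin K → ℝ) =>
        c (∑ n, X n) + ∑ n : Fin N, ρ n (X n)) X).trans hDX
      exact absurd (hr2.trans_le this) (lt_irrefl _)
    rw [EReal.coe_neg] at hI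
    exact EReal.le_neg_of_le_neg hI
  · -- unbounded below case : both sides are ⊥
    have hJ : (⨅ P : Fin K → ℝ, ((∑ n, F n P : ℝ) : EReal)) = (⊥ : EReal) :=
      aux_iInf_coe_bot _ hbdd
    rw [hJ]
    have hItop : (⨅ X : Fin N → (Fin K → ℝ), c (∑ n, X n) + ∑ n : Fin N, ρ n (X n))
        = (⊤ : EReal) := by
      rw [iInf_eq_top]
      intro X
      rw [EReal.eq_top_iff_forall_lt]
      intro y
      obtain ⟨P, hP⟩ : ∃ P : Fin K → ℝ, ∑ n, F n P < -y - 1 := by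
        by_contra hcon
        push_neg at hcon
        exact hbdd ⟨-y - 1, by rintro _ ⟨P, rfl⟩; exact hcon P⟩
      refine lt_of_lt_of_le ?_ (hweak X P)
      rw [EReal.coe_lt_coe_iff]
      linarith
    rw [hItop, EReal.neg_top]
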